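/- Let R = k[t^{a_1}, …, t^{a_n}] be a numerical semigroup ring with minimal multiplicity and let I be a homogeneous nonprincipal ideal of R with minimal homogeneous generating set x_1, …, x_m satisfying deg(x_1) < deg(x_2) < … < deg(x_m). Set y := t^{a_1}. Then y·B_1(I) ⊆ I·Z_1(I) if and only if y ∈ (x_1 : I). -/

import Mathlib

open Polynomial
open scoped Classical

set_option synthInstance.maxHeartbeats 1000000
set_option maxHeartbeats 1000000

universe u

/-- The numerical semigroup ring `k[t^{a_1}, …, t^{a_n}]`, realized as the `k`-subalgebra of the
polynomial ring `k[t]` (with `t = X`) generated by the monomials `t^{a_i}`. -/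
noncomputable def nsRing (k : Type u) [Field k] {n : ℕ} (a : Fin n → ℕ) : Subalgebra k k[X] :=
  Algebra.adjoin k (Set.range fun i => (X : k[X]) ^ (a i))

/-- The element `t^{a_i}` of the numerical semigroup ring. -/
noncomputable def tpow (k : Type u) [Field k] {n : ℕ} (a : Fin n → ℕ) (i : Fin n) :
    ↥(nsRing k a) :=
  ⟨(X : k[X]) ^ (a i), Algebra.subset_adjoin ⟨i, rfl⟩⟩

/-- An element of the numerical semigroup ring is homogeneous iff the underlying polynomial is a
monomial `c·t^d` (this includes `0`). -/
def IsHomogElt {k : Type u} [Field k] {n : ℕ} {a : Fin n → ℕ} (x : ↥(nsRing k a)) : Prop :=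
  ∃ (c : k) (d : ℕ), (x : k[X]) = C c * X ^ d

/-- `0 ≤ d` and the polynomial is a *nonzero* monomial of degree exactly `d`, or the polynomial
is zero:  "homogeneous of degree `d`" with `ℤ`-valued degrees (used for graded shifts). -/
def IsHomogOfDeg {k : Type u} [Field k] (x : k[X]) (d : ℤ) : Prop :=
  x = 0 ∨ (0 ≤ d ∧ ∃ c : k, c ≠ 0 ∧ x = C c * X ^ d.toNat)

/-- The hypotheses on the exponents of a numerical semigroup ring: positive, strictly
increasing, coprime, and minimally generating the numerical semigroup. -/
def NSGSetup {n : ℕ} (a : Fin n → ℕ) : Prop :=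
  (∀ i, 0 < a i) ∧ StrictMono a ∧ (Finset.univ.gcd a = 1) ∧
    ∀ i, (a i) ∉ AddSubmonoid.closure (a '' {j | j ≠ i})

/-- The module `Z_1(I)` of first Koszul cycles on the generating set `x`: the kernel of
`π : R^{⊕r} → R`, `e_i ↦ x_i`. -/
noncomputable def koszulZ1 {R : Type u} [CommRing R] {r : ℕ} (x : Fin r → R) :
    Submodule R (Fin r → R) :=
  LinearMap.ker (Fintype.linearCombination R x)

/-- The module `B_1(I)` of first Koszul boundaries on the generating set `x`: the submodule of
`R^{⊕r}` generated by the elements `x_i e_j − x_j e_i`. -/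
noncomputable def koszulB1 {R : Type u} [CommRing R] {r : ℕ} (x : Fin r → R) :
    Submodule R (Fin r → R) :=
  Submodule.span R
    {z : Fin r → R | ∃ i j : Fin r, i < j ∧ z = Pi.single j (x i) - Pi.single i (x j)}

section SemigroupAux

variable {n : ℕ} {a : Fin n → ℕ}

lemma aux_min (hsm : StrictMono a) (hn : 0 < n) {s : ℕ}
    (hs : s ∈ AddSubmonoid.closure (Set.range a)) (h0 : s ≠ 0) : a ⟨0, hn⟩ ≤ s := by
  induction hs using AddSubmonoid.closure_induction with
  | mem x hx =>
    obtain ⟨i, rfl⟩ := hx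
    exact hsm.monotone (by simp [Fin.le_def])
  | zero => exact absurd rfl h0
  | add p q hp hq ihp ihq =>
    rcases Nat.eq_zero_or_pos p with rfl | hp0
    · simpa using ihq (by simpa using h0)
    · have := ihp hp0.ne'
      omega

lemma aux_resid_inj (hsetup : NSGSetup a) (hn : 0 < n) :
    Function.Injective (fun l : Fin n => ((a l : ZMod (a ⟨0, hn⟩)))) := by
  obtain ⟨hpos, hsm, -, hmingen⟩ := id hsetup
  set i0 : Fin n := ⟨0, hn⟩ with hi0
  have key : ∀ l l' : Fin n, l < l' → ((a l : ZMod (a i0)) = (a l' : ZMod (a i0))) → False := by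
    intro l l' hlt h
    have hmod : a l ≡ a l' [MOD a i0] := (ZMod.natCast_eq_natCast_iff _ _ _).1 h
    have hle : a l ≤ a l' := (hsm hlt).le
    obtain ⟨c, hc⟩ := (Nat.modEq_iff_dvd' hle).1 hmod
    rw [mul_comm] at hc
    have hc0 : c ≠ 0 := by
      rintro rfl
      have := hsm hlt
      omega
    have hll' : a l' = a l + c * a i0 := by
      have := hsm hlt; omega
    have hne1 : i0 ≠ l' := by
      intro hh
      have h1 : a i0 ≤ a l := hsm.monotone (by simp [Fin.le_def, hi0])
      have h2 := hsm hlt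
      rw [hh] at h1
      omega
    apply hmingen l'
    rw [hll']
    apply AddSubmonoid.add_mem
    · exact AddSubmonoid.subset_closure ⟨l, hlt.ne, rfl⟩
    · have hmem : a i0 ∈ AddSubmonoid.closure (a '' {j | j ≠ l'}) :=
        AddSubmonoid.subset_closure ⟨i0, hne1, rfl⟩
      simpa [nsmul_eq_mul] using AddSubmonoid.nsmul_mem _ hmem c
  intro l l' h
  rcases lt_trichotomy l l' with h1 | h1 | h1
  · exact absurd (key l l' h1 h) not_false
  · exact h1
  · exact absurd (key l' l h1 h.symm) not_false

lemma aux_decomp2 (hsetup : NSGSetup a) (hn : 0 < n) (hminmult : a ⟨0, hn⟩ = n) (i j : Fin n) :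
    ∃ (l : Fin n) (c : ℕ), a i + a j = a l + (c + 1) * a ⟨0, hn⟩ := by
  obtain ⟨hpos, hsm, -, hmingen⟩ := id hsetup
  set i0 : Fin n := ⟨0, hn⟩ with hi0
  haveI : NeZero (a i0) := ⟨(hpos i0).ne'⟩
  have hsurj : Function.Surjective (fun l : Fin n => ((a l : ZMod (a i0)))) := by
    have hinj := aux_resid_inj hsetup hn
    have hcard : Fintype.card (Fin n) = Fintype.card (ZMod (a i0)) := by
      rw [ZMod.card, Fintype.card_fin, hminmult]
    exact ((Fintype.bijective_iff_injective_and_card _).2 ⟨hinj, hcard⟩).2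
  obtain ⟨l, hl⟩ := hsurj ((a i + a j : ℕ) : ZMod (a i0))
  have hmod : a l ≡ a i + a j [MOD a i0] := by
    apply (ZMod.natCast_eq_natCast_iff _ _ _).1
    simpa using hl
  have hil : a i < a i + a j := by have := hpos j; omega
  have hjl : a j < a i + a j := by have := hpos i; omega
  have hpi := hpos i
  have hpj := hpos j
  rcases le_or_gt (a l) (a i + a j) with hle | hlt
  · obtain ⟨c, hc⟩ := (Nat.modEq_iff_dvd' hle).1 hmod
    rw [mul_comm] at hc
    rcases Nat.eq_zero_or_pos c with rfl | hc0
    · exfalso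
      apply hmingen l
      have h1 : a l = a i + a j := by omega
      have hi' : i ≠ l := by rintro rfl; omega
      have hj' : j ≠ l := by rintro rfl; omega
      rw [h1]
      exact AddSubmonoid.add_mem _
        (AddSubmonoid.subset_closure ⟨i, hi', rfl⟩)
        (AddSubmonoid.subset_closure ⟨j, hj', rfl⟩)
    · obtain ⟨c', rfl⟩ : ∃ c', c = c' + 1 := ⟨c - 1, by omega⟩
      exact ⟨l, c', by omega⟩
  · exfalso
    obtain ⟨c, hc⟩ := (Nat.modEq_iff_dvd' hlt.le).1 hmod.symm
    rw [mul_comm] at hc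
    have hc0 : c ≠ 0 := by rintro rfl; omega
    have heq : a l = a i + a j + c * a i0 := by omega
    have hcpos : 1 ≤ c * a i0 := Nat.one_le_iff_ne_zero.mpr (Nat.mul_ne_zero hc0 (hpos i0).ne')
    have hi' : i ≠ l := by rintro rfl; omega
    have hj' : j ≠ l := by rintro rfl; omega
    have h0' : i0 ≠ l := by
      intro hh
      have h1 : a i0 ≤ a i := hsm.monotone (by simp [Fin.le_def, hi0])
      rw [hh] at h1
      omega
    apply hmingen l
    rw [heq]
    apply AddSubmonoid.add_mem
    · exact AddSubmonoid.add_mem _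
        (AddSubmonoid.subset_closure ⟨i, hi', rfl⟩)
        (AddSubmonoid.subset_closure ⟨j, hj', rfl⟩)
    · have hmem : a i0 ∈ AddSubmonoid.closure (a '' {j | j ≠ l}) :=
        AddSubmonoid.subset_closure ⟨i0, h0', rfl⟩
      simpa [nsmul_eq_mul] using AddSubmonoid.nsmul_mem _ hmem c

lemma aux_decomp (hsetup : NSGSetup a) (hn : 0 < n) (hminmult : a ⟨0, hn⟩ = n) {s : ℕ}
    (hs : s ∈ AddSubmonoid.closure (Set.range a)) :
    s = 0 ∨ ∃ (l : Fin n) (c : ℕ), s = a l + c * a ⟨0, hn⟩ := by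
  induction hs using AddSubmonoid.closure_induction with
  | mem x hx => obtain ⟨i, rfl⟩ := hx; exact Or.inr ⟨i, 0, by ring⟩
  | zero => exact Or.inl rfl
  | add p q hp hq ihp ihq =>
    rcases ihp with rfl | ⟨l, c, rfl⟩
    · simpa using ihq
    rcases ihq with rfl | ⟨l', c', rfl⟩
    · exact Or.inr ⟨l, c, by ring⟩
    obtain ⟨L, C, hLC⟩ := aux_decomp2 hsetup hn hminmult l l'
    refine Or.inr ⟨L, C + 1 + c + c', ?_⟩
    have hexp : (C + 1 + c + c') * a ⟨0, hn⟩
        = (C + 1) * a ⟨0, hn⟩ + c * a ⟨0, hn⟩ + c' * a ⟨0, hn⟩ := by ring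
    omega

lemma aux_key (hsetup : NSGSetup a) (hn : 0 < n) (hminmult : a ⟨0, hn⟩ = n) {s₁ s₂ : ℕ}
    (h₁ : s₁ ∈ AddSubmonoid.closure (Set.range a)) (h₂ : s₂ ∈ AddSubmonoid.closure (Set.range a))
    (h₁0 : s₁ ≠ 0) (h₂0 : s₂ ≠ 0) :
    ∃ s₃ ∈ AddSubmonoid.closure (Set.range a), s₃ ≠ 0 ∧ s₁ + s₂ = a ⟨0, hn⟩ + s₃ := by
  obtain (rfl | ⟨l, c, rfl⟩) := aux_decomp hsetup hn hminmult h₁; · exact absurd rfl h₁0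
  obtain (rfl | ⟨l', c', rfl⟩) := aux_decomp hsetup hn hminmult h₂; · exact absurd rfl h₂0
  obtain ⟨L, C, hLC⟩ := aux_decomp2 hsetup hn hminmult l l'
  refine ⟨a L + (C + c + c') * a ⟨0, hn⟩, ?_, ?_, ?_⟩
  · apply AddSubmonoid.add_mem
    · exact AddSubmonoid.subset_closure ⟨L, rfl⟩
    · have hmem : a ⟨0, hn⟩ ∈ AddSubmonoid.closure (Set.range a) :=
        AddSubmonoid.subset_closure ⟨⟨0, hn⟩, rfl⟩
      simpa [nsmul_eq_mul] using AddSubmonoid.nsmul_mem _ hmem (C + c + c')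
  · have := hsetup.1 L; omega
  · have hexp1 : (C + c + c') * a ⟨0, hn⟩
      = C * a ⟨0, hn⟩ + c * a ⟨0, hn⟩ + c' * a ⟨0, hn⟩ := by ring
    have hexp2 : (C + 1) * a ⟨0, hn⟩ = C * a ⟨0, hn⟩ + a ⟨0, hn⟩ := by ring
    omega

end SemigroupAux

section RingAux

variable {k : Type u} [Field k] {n : ℕ} {a : Fin n → ℕ}

/-- elements of the semigroup ring have coefficient support in the semigroup -/
lemma aux_coeff_mem {r : k[X]} (hr : r ∈ nsRing k a) :
    ∀ e : ℕ, r.coeff e ≠ 0 → e ∈ AddSubmonoid.closure (Set.range a) := by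
  induction hr using Algebra.adjoin_induction with
  | mem p hp =>
    intro e he
    obtain ⟨i, rfl⟩ := hp
    rw [coeff_X_pow] at he
    by_cases h : e = a i
    · exact h ▸ AddSubmonoid.subset_closure ⟨i, rfl⟩
    · simp [h] at he
  | algebraMap r =>
    intro e he
    have : (algebraMap k k[X]) r = C r := rfl
    rw [this, coeff_C] at he
    by_cases h : e = 0
    · exact h ▸ (AddSubmonoid.closure _).zero_mem
    · simp [h] at he
  | add p q hp hq ihp ihq =>
    intro e he
    rw [coeff_add] at he
    by_cases h : p.coeff e = 0
    · exact ihq e (by rw [h, zero_add] at he; exact he)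
    · exact ihp e h
  | mul p q hp hq ihp ihq =>
    intro e he
    rw [coeff_mul] at he
    obtain ⟨⟨u, v⟩, huv, hne2⟩ := Finset.exists_ne_zero_of_sum_ne_zero he
    rw [Finset.HasAntidiagonal.mem_antidiagonal] at huv
    exact huv ▸ AddSubmonoid.add_mem _
      (ihp u (left_ne_zero_of_mul hne2)) (ihq v (right_ne_zero_of_mul hne2))

/-- monomials with exponent in the semigroup lie in the semigroup ring -/
lemma aux_xpow_mem {s : ℕ} (hs : s ∈ AddSubmonoid.closure (Set.range a)) :
    (X : k[X]) ^ s ∈ nsRing k a := by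
  induction hs using AddSubmonoid.closure_induction with
  | mem x hx => obtain ⟨i, rfl⟩ := hx; exact Algebra.subset_adjoin ⟨i, rfl⟩
  | zero => simpa using (nsRing k a).one_mem
  | add p q hp hq ihp ihq => rw [pow_add]; exact mul_mem ihp ihq

/-- scalar monomials with exponent in the semigroup lie in the semigroup ring -/
lemma aux_monomial_mem (c : k) {s : ℕ} (hs : s ∈ AddSubmonoid.closure (Set.range a)) :
    C c * (X : k[X]) ^ s ∈ nsRing k a := by
  rw [← smul_eq_C_mul]
  exact Subalgebra.smul_mem _ (aux_xpow_mem hs) c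

end RingAux

section CycleAux

variable {k : Type u} [Field k] {n : ℕ} {a : Fin n → ℕ} {m : ℕ}

/-- From a Koszul cycle with a nonzero coefficient in coordinate `j` (at total degree `D`),
extract another coordinate `l ≠ j` with a nonzero coefficient at total degree `D`. -/
lemma aux_cycle {x : Fin m → ↥(nsRing k a)} {c : Fin m → k} {d : Fin m → ℕ}
    (hx : ∀ i, ((x i : k[X])) = C (c i) * X ^ d i) (hc : ∀ i, c i ≠ 0)
    {z : Fin m → ↥(nsRing k a)} (hz : z ∈ koszulZ1 x) {D : ℕ} {j : Fin m}
    (hdj : d j ≤ D) (hcoef : ((z j : k[X])).coeff (D - d j) ≠ 0) :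
    ∃ l, l ≠ j ∧ d l ≤ D ∧ ((z l : k[X])).coeff (D - d l) ≠ 0 := by
  have hz' : (∑ l, (z l) • (x l)) = (0 : ↥(nsRing k a)) := by
    rwa [koszulZ1, LinearMap.mem_ker, Fintype.linearCombination_apply] at hz
  have hsum : (∑ l, (z l : k[X]) * (x l : k[X])) = 0 := by
    have h2 := congrArg (Subtype.val) hz'
    simp only [AddSubmonoidClass.coe_finset_sum, smul_eq_mul, MulMemClass.coe_mul,
      ZeroMemClass.coe_zero] at h2
    exact h2
  have h3 : ∑ l, ((z l : k[X]) * (x l : k[X])).coeff D = 0 := by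
    rw [← Polynomial.finset_sum_coeff, hsum, Polynomial.coeff_zero]
  have hterm : ∀ l, ((z l : k[X]) * (x l : k[X])).coeff D
      = (if d l ≤ D then ((z l : k[X])).coeff (D - d l) else 0) * c l := by
    intro l
    rw [hx l, show (z l : k[X]) * (C (c l) * X ^ d l) = ((z l : k[X]) * X ^ d l) * C (c l) from
      by ring, coeff_mul_C, coeff_mul_X_pow']
  have hco : ∑ l, (if d l ≤ D then ((z l : k[X])).coeff (D - d l) else 0) * c l = 0 :=
    (Finset.sum_congr rfl fun l _ => (hterm l).symm).trans h3
  have hfj : (if d j ≤ D then ((z j : k[X])).coeff (D - d j) else 0) * c j ≠ 0 := by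
    rw [if_pos hdj]; exact mul_ne_zero hcoef (hc j)
  have hsplit : (if d j ≤ D then ((z j : k[X])).coeff (D - d j) else 0) * c j +
      ∑ l ∈ Finset.univ.erase j,
        (if d l ≤ D then ((z l : k[X])).coeff (D - d l) else 0) * c l = 0 :=
    (Finset.add_sum_erase Finset.univ
      (fun l => (if d l ≤ D then ((z l : k[X])).coeff (D - d l) else 0) * c l)
      (Finset.mem_univ j)).trans hco
  have hrest : ∑ l ∈ Finset.univ.erase j,
      (if d l ≤ D then ((z l : k[X])).coeff (D - d l) else 0) * c l ≠ 0 := by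
    intro h; rw [h, add_zero] at hsplit; exact hfj hsplit
  obtain ⟨l, hlmem, hl⟩ := Finset.exists_ne_zero_of_sum_ne_zero hrest
  have hlj : l ≠ j := (Finset.mem_erase.1 hlmem).1
  have h4 := left_ne_zero_of_mul hl
  by_cases hle : d l ≤ D
  · exact ⟨l, hlj, hle, by simpa [hle] using h4⟩
  · rw [if_neg hle] at h4; exact absurd rfl h4

/-- Minimality of the generating set forces all coordinates of Koszul cycles to have zero
constant coefficient. -/
lemma aux_cycle_coeff_zero (hsm : StrictMono a) (hn : 0 < n) (hm : 0 < m)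
    {x : Fin m → ↥(nsRing k a)} {c : Fin m → k}
    (hx : ∀ i, ((x i : k[X])) = C (c i) * X ^ (x i : k[X]).natDegree) (hc : ∀ i, c i ≠ 0)
    (hdeg : StrictMono fun i => ((x i : k[X]).natDegree))
    {I : Ideal ↥(nsRing k a)} (hgen : Ideal.span (Set.range x) = I)
    (hmin : ∀ (s : ℕ) (w : Fin s → ↥(nsRing k a)), Ideal.span (Set.range w) = I → m ≤ s)
    {z : Fin m → ↥(nsRing k a)} (hz : z ∈ koszulZ1 x) (j : Fin m) :
    ((z j : k[X])).coeff 0 = 0 := by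
  set d : Fin m → ℕ := fun i => (x i : k[X]).natDegree with hd
  by_contra h0
  obtain ⟨l, hlj, hld, hcl⟩ := aux_cycle hx hc hz (le_refl (d j))
    (by simpa [hd, Nat.sub_self] using h0)
  have hsS : (d j - d l) ∈ AddSubmonoid.closure (Set.range a) :=
    aux_coeff_mem (z l).2 _ hcl
  have hlltj : l < j := lt_of_le_of_ne (hdeg.le_iff_le.1 hld) hlj
  have hjm : j.val < m := j.isLt
  -- the generating set omitting j
  have hjm1 : l.val < m - 1 := by have := hlltj; have : l.val < j.val := this; omega
  set emb : Fin (m - 1) → Fin m := fun p =>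
    if h : p.val < j.val then ⟨p.val, by omega⟩ else ⟨p.val + 1, by omega⟩ with hemb
  set w : Fin (m - 1) → ↥(nsRing k a) := fun p => x (emb p) with hw
  have hxl_mem : x l ∈ Ideal.span (Set.range w) := by
    refine Ideal.subset_span ⟨⟨l.val, hjm1⟩, ?_⟩
    rw [hw]
    have hpe : emb ⟨l.val, hjm1⟩ = l := by
      simp only [hemb]
      rw [dif_pos (show (l.val : ℕ) < j.val from hlltj)]
    exact congrArg x hpe
  have hxj : x j = (⟨C (c j * (c l)⁻¹) * X ^ (d j - d l), aux_monomial_mem _ hsS⟩ :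
      ↥(nsRing k a)) * x l := by
    apply Subtype.ext
    push_cast
    rw [hx l, hx j]
    have e1 : (d j - d l) + d l = d j := Nat.sub_add_cancel hld
    rw [show C (c j * (c l)⁻¹) * X ^ (d j - d l) * (C (c l) * X ^ d l)
        = C (c j * ((c l)⁻¹ * c l)) * X ^ (d j - d l + d l) from by
      simp only [C_mul, pow_add]; ring]
    rw [inv_mul_cancel₀ (hc l), mul_one, e1]
  have hall : ∀ p : Fin m, x p ∈ Ideal.span (Set.range w) := by
    intro p
    by_cases hpj : p = j
    · subst hpj
      rw [hxj]
      exact Ideal.mul_mem_left _ _ hxl_mem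
    · rcases lt_or_gt_of_ne (fun h : p.val = j.val => hpj (Fin.ext h)) with hlt | hgt
      · have hple : p.val < m - 1 := by omega
        refine Ideal.subset_span ⟨⟨p.val, hple⟩, ?_⟩
        rw [hw]
        have hpe : emb ⟨p.val, hple⟩ = p := by
          simp only [hemb]
          rw [dif_pos hlt]
        exact congrArg x hpe
      · have hple : p.val - 1 < m - 1 := by omega
        refine Ideal.subset_span ⟨⟨p.val - 1, hple⟩, ?_⟩
        rw [hw]
        have hpe : emb ⟨p.val - 1, hple⟩ = p := by
          simp only [hemb]
          have hnot : ¬ ((⟨p.val - 1, hple⟩ : Fin (m - 1)).val < j.val) := by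
            show ¬ (p.val - 1 < j.val); omega
          rw [dif_neg hnot]
          apply Fin.ext
          show p.val - 1 + 1 = p.val
          omega
        exact congrArg x hpe
  have hspan : Ideal.span (Set.range w) = I := by
    apply le_antisymm
    · rw [Ideal.span_le]
      rintro g ⟨p, rfl⟩
      rw [hw, ← hgen]
      exact Ideal.subset_span ⟨emb p, rfl⟩
    · rw [← hgen, Ideal.span_le]
      rintro g ⟨p, rfl⟩
      exact hall p
  have := hmin (m - 1) w hspan
  omega

end CycleAux

set_option maxHeartbeats 8000000 in
theorem smul_boundaries_iff_mem_colon {k : Type u} [Field k] {n : ℕ} (a : Fin n → ℕ)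
    (hsetup : NSGSetup a) (hn : 0 < n)
    (hminmult : a ⟨0, hn⟩ = n)
    (I : Ideal ↥(nsRing k a))
    (hnonprin : ¬ ∃ z : ↥(nsRing k a), I = Ideal.span {z})
    {m : ℕ} (hm : 0 < m) (x : Fin m → ↥(nsRing k a))
    (hhom : ∀ i, IsHomogElt (x i)) (hne : ∀ i, x i ≠ 0)
    (hdeg : StrictMono fun i => ((x i : k[X]).natDegree))
    (hgen : Ideal.span (Set.range x) = I)
    (hmin : ∀ (s : ℕ) (w : Fin s → ↥(nsRing k a)), Ideal.span (Set.range w) = I → m ≤ s) :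
    (Ideal.span {tpow k a ⟨0, hn⟩}) • koszulB1 x ≤ I • koszulZ1 x ↔
      tpow k a ⟨0, hn⟩ ∈ (Ideal.span {x ⟨0, hm⟩}).colon I := by
  obtain ⟨hpos, hsm, hgcd, hmingen⟩ := id hsetup
  set S : AddSubmonoid ℕ := AddSubmonoid.closure (Set.range a) with hS
  set y : ↥(nsRing k a) := tpow k a ⟨0, hn⟩ with hydef
  have hyc : (y : k[X]) = X ^ (a ⟨0, hn⟩) := rfl
  set d : Fin m → ℕ := fun i => (x i : k[X]).natDegree with hd
  choose c dd hcd using hhom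
  have hc : ∀ i, c i ≠ 0 := by
    intro i h
    apply hne i
    apply Subtype.ext
    rw [hcd i, h]
    simp
  have hx : ∀ i, (x i : k[X]) = C (c i) * X ^ d i := by
    intro i
    have hddi : d i = dd i := by
      show (x i : k[X]).natDegree = dd i
      rw [hcd i, natDegree_C_mul_X_pow _ _ (hc i)]
    rw [hddi]
    exact hcd i
  have hxImem : ∀ i, x i ∈ I := fun i => hgen ▸ Ideal.subset_span ⟨i, rfl⟩
  have hi1le : ∀ i : Fin m, d ⟨0, hm⟩ ≤ d i := by
    intro i
    exact hdeg.monotone (by simp [Fin.le_def])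
  have hapos : 0 < a ⟨0, hn⟩ := hpos ⟨0, hn⟩
  constructor
  · -- forward direction
    intro H
    have hIbound : ∀ f ∈ I, ∀ u : ℕ, (f : k[X]).coeff u ≠ 0 → d ⟨0, hm⟩ ≤ u := by
      intro f hf
      rw [← hgen] at hf
      induction hf using Submodule.span_induction with
      | mem g hg =>
        obtain ⟨p, rfl⟩ := hg
        intro u hu
        rw [hx p, coeff_C_mul, coeff_X_pow] at hu
        by_cases h : u = d p
        · rw [h]; exact hi1le p
        · simp [h] at hu
      | zero => intro u hu; simp at hu
      | add g g' hg hg' ihg ihg' =>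
        intro u hu
        rw [AddMemClass.coe_add, coeff_add] at hu
        by_cases h : (g : k[X]).coeff u = 0
        · exact ihg' u (by rwa [h, zero_add] at hu)
        · exact ihg u h
      | smul r g hg ihg =>
        intro u hu
        rw [smul_eq_mul, MulMemClass.coe_mul, coeff_mul] at hu
        obtain ⟨⟨u1, u2⟩, huv, hne2⟩ := Finset.exists_ne_zero_of_sum_ne_zero hu
        rw [Finset.HasAntidiagonal.mem_antidiagonal] at huv
        have := ihg u2 (right_ne_zero_of_mul hne2)
        omega
    -- extraction of a smaller witness from the hypothesis H
    have ext : ∀ i : Fin m, ⟨0, hm⟩ < i →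
        ∃ l : Fin m, l < i ∧ ∃ s, s ∈ S ∧ s ≠ 0 ∧ a ⟨0, hn⟩ + d i = d l + s := by
      intro i hi
      set bb : Fin m → ↥(nsRing k a) := Pi.single i (x ⟨0, hm⟩) - Pi.single (⟨0, hm⟩ : Fin m) (x i)
        with hbb
      have hb : bb ∈ koszulB1 x := Submodule.subset_span ⟨⟨0, hm⟩, i, hi, rfl⟩
      have hv : y • bb ∈ I • koszulZ1 x :=
        H (Submodule.smul_mem_smul (Ideal.mem_span_singleton_self y) hb)
      have key : ∀ v ∈ I • koszulZ1 x, ((v i : k[X]).coeff (a ⟨0, hn⟩ + d ⟨0, hm⟩) ≠ 0) →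
          ∃ l : Fin m, l ≠ i ∧ d l ≤ a ⟨0, hn⟩ + d i ∧ (a ⟨0, hn⟩ + d i - d l) ∈ S ∧
            (a ⟨0, hn⟩ + d i - d l) ≠ 0 := by
        intro v hv
        refine Submodule.smul_induction_on hv ?_ ?_
        · intro r hr z hz hcoeff
          simp only [Pi.smul_apply, smul_eq_mul] at hcoeff
          rw [MulMemClass.coe_mul, coeff_mul] at hcoeff
          obtain ⟨⟨u, v'⟩, huv, hne2⟩ := Finset.exists_ne_zero_of_sum_ne_zero hcoeff
          rw [Finset.HasAntidiagonal.mem_antidiagonal] at huv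
          have hu : d ⟨0, hm⟩ ≤ u := hIbound r hr u (left_ne_zero_of_mul hne2)
          have hv'S : v' ∈ S := aux_coeff_mem (z i).2 v' (right_ne_zero_of_mul hne2)
          have hv0 : v' ≠ 0 := by
            rintro rfl
            exact (right_ne_zero_of_mul hne2)
              (aux_cycle_coeff_zero hsm hn hm hx hc hdeg hgen hmin hz i)
          have hva : v' = a ⟨0, hn⟩ := by
            have := aux_min hsm hn hv'S hv0
            omega
          have hzi : ((z i : k[X])).coeff (a ⟨0, hn⟩) ≠ 0 := hva ▸ right_ne_zero_of_mul hne2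
          have hD : d i ≤ a ⟨0, hn⟩ + d i := Nat.le_add_left _ _
          obtain ⟨l, hli, hld, hcl⟩ := aux_cycle hx hc hz hD
            (by rwa [Nat.add_sub_cancel])
          refine ⟨l, hli, hld, aux_coeff_mem (z l).2 _ hcl, ?_⟩
          intro h0
          rw [h0] at hcl
          exact hcl (aux_cycle_coeff_zero hsm hn hm hx hc hdeg hgen hmin hz l)
        · intro v w hvp hwp hcoeff
          simp only [Pi.add_apply, AddMemClass.coe_add, coeff_add] at hcoeff
          by_cases h : ((v i : k[X])).coeff (a ⟨0, hn⟩ + d ⟨0, hm⟩) = 0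
          · exact hwp (by rwa [h, zero_add] at hcoeff)
          · exact hvp h
      have hvi : (((y • bb) i : k[X])).coeff (a ⟨0, hn⟩ + d ⟨0, hm⟩) ≠ 0 := by
        have h1 : (y • bb) i = y * x ⟨0, hm⟩ := by
          rw [hbb]
          simp only [Pi.smul_apply, Pi.sub_apply, smul_eq_mul]
          rw [Pi.single_eq_same, Pi.single_eq_of_ne (ne_of_gt hi), sub_zero]
        rw [h1, MulMemClass.coe_mul, hyc, hx ⟨0, hm⟩]
        rw [show (X : k[X]) ^ (a ⟨0, hn⟩) * (C (c ⟨0, hm⟩) * X ^ d ⟨0, hm⟩)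
            = C (c ⟨0, hm⟩) * X ^ (a ⟨0, hn⟩ + d ⟨0, hm⟩) from by rw [pow_add]; ring]
        rw [coeff_C_mul, coeff_X_pow, if_pos rfl, mul_one]
        exact hc ⟨0, hm⟩
      obtain ⟨l, hli, hld, hsS, hs0⟩ := key _ hv hvi
      have hge : a ⟨0, hn⟩ ≤ a ⟨0, hn⟩ + d i - d l := aux_min hsm hn hsS hs0
      have hdle : d l ≤ d i := by omega
      have hlle : l < i := lt_of_le_of_ne (hdeg.le_iff_le.1 hdle) hli
      exact ⟨l, hlle, a ⟨0, hn⟩ + d i - d l, hsS, hs0, by omega⟩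
    -- strong induction
    have main : ∀ (N : ℕ) (i : Fin m), i.val ≤ N →
        ∃ s, s ∈ S ∧ a ⟨0, hn⟩ + d i = d ⟨0, hm⟩ + s := by
      intro N
      induction N with
      | zero =>
        intro i hiv
        have : i = ⟨0, hm⟩ := Fin.ext (by omega : i.val = 0)
        exact ⟨a ⟨0, hn⟩, AddSubmonoid.subset_closure ⟨⟨0, hn⟩, rfl⟩, by rw [this]; omega⟩
      | succ N ih =>
        intro i hiv
        by_cases hii : i = ⟨0, hm⟩
        · exact ⟨a ⟨0, hn⟩, AddSubmonoid.subset_closure ⟨⟨0, hn⟩, rfl⟩, by rw [hii]; omega⟩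
        · have hi1lt : (⟨0, hm⟩ : Fin m) < i := by
            have hv0 : i.val ≠ 0 := fun h0 => hii (Fin.ext h0)
            exact Fin.lt_def.2 (show (0 : ℕ) < i.val by omega)
          obtain ⟨l, hl, s', hs'S, hs'0, heq⟩ := ext i hi1lt
          have hlN : l.val ≤ N := by
            have h1 : l.val < i.val := hl
            omega
          obtain ⟨sj, hsjS, heqj⟩ := ih l hlN
          have hsj0 : sj ≠ 0 := by
            have := hi1le l
            intro h0
            rw [h0] at heqj
            omega
          obtain ⟨s3, hs3S, hs30, hkey⟩ := aux_key hsetup hn hminmult hs'S hsjS hs'0 hsj0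
          exact ⟨s3, hs3S, by omega⟩
    -- conclude the colon membership
    rw [Submodule.mem_colon]
    intro p hp
    rw [← hgen] at hp
    induction hp using Submodule.span_induction with
    | mem g hg =>
      obtain ⟨p, rfl⟩ := hg
      obtain ⟨s, hsS', hseq⟩ := main p.val p le_rfl
      rw [smul_eq_mul]
      refine Ideal.mem_span_singleton'.2
        ⟨⟨C (c p * (c ⟨0, hm⟩)⁻¹) * X ^ s, aux_monomial_mem _ hsS'⟩, ?_⟩
      apply Subtype.ext
      push_cast
      rw [hx ⟨0, hm⟩, hx p, hyc]
      rw [show C (c p * (c ⟨0, hm⟩)⁻¹) * X ^ s * (C (c ⟨0, hm⟩) * X ^ d ⟨0, hm⟩)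
          = C (c p * ((c ⟨0, hm⟩)⁻¹ * c ⟨0, hm⟩)) * X ^ (s + d ⟨0, hm⟩) from by
        simp only [C_mul, pow_add]; ring]
      rw [inv_mul_cancel₀ (hc ⟨0, hm⟩), mul_one]
      rw [show s + d ⟨0, hm⟩ = a ⟨0, hn⟩ + d p from by omega]
      rw [pow_add]
      ring
    | zero => rw [smul_zero]; exact Ideal.zero_mem _
    | add g g' hg hg' ihg ihg' => rw [smul_add]; exact Ideal.add_mem _ ihg ihg'
    | smul r g hg ihg =>
      rw [smul_comm]
      exact Submodule.smul_mem _ r ihg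
  · -- backward direction
    intro hcol
    have hyx : ∀ p : Fin m, ∃ rr : ↥(nsRing k a), rr * x ⟨0, hm⟩ = y * x p := by
      intro p
      have := Submodule.mem_colon.1 hcol (x p) (hxImem p)
      rw [smul_eq_mul] at this
      exact Ideal.mem_span_singleton'.1 this
    choose rr hrr using hyx
    have hsig : ∀ p : Fin m, (Pi.single p y - Pi.single (⟨0, hm⟩ : Fin m) (rr p)) ∈ koszulZ1 x := by
      intro p
      rw [koszulZ1, LinearMap.mem_ker, map_sub, Fintype.linearCombination_apply_single,
        Fintype.linearCombination_apply_single, smul_eq_mul, smul_eq_mul, ← hrr p, sub_self]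
    have hyB : ∀ b ∈ koszulB1 x, y • b ∈ I • koszulZ1 x := by
      intro b hb
      induction hb using Submodule.span_induction with
      | mem g hg =>
        obtain ⟨i, j, hij, rfl⟩ := hg
        have hkey : x i * rr j = x j * rr i := by
          have hx10 : x ⟨0, hm⟩ ≠ 0 := hne ⟨0, hm⟩
          apply mul_left_cancel₀ hx10
          calc x ⟨0, hm⟩ * (x i * rr j) = x i * (rr j * x ⟨0, hm⟩) := by ring
            _ = x i * (y * x j) := by rw [hrr j]
            _ = x j * (y * x i) := by ring
            _ = x j * (rr i * x ⟨0, hm⟩) := by rw [hrr i]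
            _ = x ⟨0, hm⟩ * (x j * rr i) := by ring
        have hsingle : ∀ (q : Fin m) (u v : ↥(nsRing k a)),
            u • (Pi.single q v : Fin m → ↥(nsRing k a)) = Pi.single q (u * v) := by
          intro q u v
          funext p
          by_cases h : p = q
          · subst h
            simp only [Pi.smul_apply, Pi.single_eq_same, smul_eq_mul]
          · simp only [Pi.smul_apply, Pi.single_eq_of_ne h, smul_eq_mul, mul_zero]
        have hexpand : y • (Pi.single j (x i) - Pi.single i (x j)) =
            x i • (Pi.single j y - Pi.single (⟨0, hm⟩ : Fin m) (rr j) : Fin m → ↥(nsRing k a)) -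
              x j • (Pi.single i y - Pi.single (⟨0, hm⟩ : Fin m) (rr i) : Fin m → ↥(nsRing k a)) := by
          rw [smul_sub, smul_sub, smul_sub, hsingle, hsingle, hsingle, hsingle, hsingle,
            hsingle, hkey, mul_comm (x i) y, mul_comm (x j) y]
          abel
        rw [hexpand]
        exact Submodule.sub_mem _
          (Submodule.smul_mem_smul (hxImem i) (hsig j))
          (Submodule.smul_mem_smul (hxImem j) (hsig i))
      | zero => rw [smul_zero]; exact Submodule.zero_mem _
      | add g g' hg hg' ihg ihg' => rw [smul_add]; exact Submodule.add_mem _ ihg ihg'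
      | smul r g hg ihg =>
        rw [smul_comm]
        exact Submodule.smul_mem _ r ihg
    rw [Submodule.smul_le]
    intro r hr b hb
    obtain ⟨g, rfl⟩ := Ideal.mem_span_singleton'.1 hr
    rw [show (g * y) • b = g • (y • b) from by rw [smul_smul]]
    exact Submodule.smul_mem _ g (hyB b hb)
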